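/- Let ρ be a nonempty Cayley permutation and σ a ρ-minimal inversion sequence. Then |σ| - dist(σ) = |ρ| - dist(ρ) + mdd(ρ), where dist counts the number of distinct values and mdd(ρ) = max_i (ρ_i - i + 1). -/

import Mathlib

/-- `σ` is an inversion sequence: `σ_i ∈ {0,…,i-1}` (0-indexed: `σ[i] ≤ i`). -/
def IsInvSeq (σ : List ℕ) : Prop := ∀ i < σ.length, σ.getD i 0 ≤ i

/-- `σ` is a Cayley permutation: its value set is `{0,…,max σ}` (downward closed). -/
def IsCayley (σ : List ℕ) : Prop := ∀ v w : ℕ, w ∈ σ → v ≤ w → v ∈ σ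

/-- Maximum diagonal difference `max_i (σ_i - i + 1)` (0-indexed: `max_i (σ[i] - i)`). -/
def mdd (σ : List ℕ) : ℤ :=
  ((List.range σ.length).map (fun i => (σ.getD i 0 : ℤ) - i)).foldr max (-(σ.length : ℤ))

/-- `τ` and `σ` are order-isomorphic sequences of the same length. -/
def OrdIso (τ σ : List ℕ) : Prop :=
  τ.length = σ.length ∧ ∀ i j : ℕ, i < τ.length → j < τ.length →
    (τ.getD i 0 ≤ τ.getD j 0 ↔ σ.getD i 0 ≤ σ.getD j 0)

/-- `σ` contains the pattern `ρ` (i.e. `ρ ⪯ σ`): some subsequence of `σ` is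
order-isomorphic to `ρ`. -/
def ContainsPat (σ ρ : List ℕ) : Prop := ∃ τ : List ℕ, τ.Sublist σ ∧ OrdIso ρ τ

/-- The reduction of `σ`: the `j`-th smallest distinct value is replaced by `j-1`. -/
def red (σ : List ℕ) : List ℕ :=
  σ.map (fun v => (σ.toFinset.filter (fun w => w < v)).card)

/-- Number of distinct values of `σ`. -/
def distv (σ : List ℕ) : ℕ := σ.toFinset.card

/-- Positions (0-indexed) of saturated entries of `σ`. -/
def Sat (σ : List ℕ) : Set ℕ := {i | i < σ.length ∧ (σ.getD i 0 : ℤ) - i = mdd σ}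

/-- `σ` is a ρ-minimal inversion sequence: a minimal element, under pattern
containment, of the set of inversion sequences that are Cayley permutations and
contain `ρ`. -/
def IsMinimalFor (ρ σ : List ℕ) : Prop :=
  IsInvSeq σ ∧ IsCayley σ ∧ ContainsPat σ ρ ∧
  ∀ τ : List ℕ, IsInvSeq τ → IsCayley τ → ContainsPat τ ρ → ContainsPat σ τ → τ = σ

namespace StmtAux

/-- rank of a value in a list -/
def rk (L : List ℕ) (v : ℕ) : ℕ := (L.toFinset.filter (fun w => w < v)).card

lemma red_eq_map (L : List ℕ) : red L = L.map (rk L) := rfl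

lemma red_length (L : List ℕ) : (red L).length = L.length := by simp [red]

lemma getD_eq_get (L : List ℕ) {i : ℕ} (h : i < L.length) : L.getD i 0 = L[i] :=
  List.getD_eq_getElem L 0 h

lemma red_getD (L : List ℕ) {i : ℕ} (h : i < L.length) :
    (red L).getD i 0 = rk L (L.getD i 0) := by
  rw [red_eq_map, getD_eq_get _ (by simpa [red] using h), getD_eq_get _ h, List.getElem_map]

lemma rk_le (L : List ℕ) (v : ℕ) : rk L v ≤ v := by
  have : (L.toFinset.filter (fun w => w < v)) ⊆ Finset.range v := by
    intro x hx
    simp only [Finset.mem_filter] at hx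
    simpa using hx.2
  simpa [rk] using Finset.card_le_card this

lemma rk_mono (L : List ℕ) {x y : ℕ} (h : x ≤ y) : rk L x ≤ rk L y := by
  apply Finset.card_le_card
  intro a ha
  simp only [Finset.mem_filter] at ha ⊢
  exact ⟨ha.1, lt_of_lt_of_le ha.2 h⟩

lemma rk_strict (L : List ℕ) {x y : ℕ} (hx : x ∈ L) (h : x < y) : rk L x < rk L y := by
  apply Finset.card_lt_card
  constructor
  · intro a ha
    simp only [Finset.mem_filter] at ha ⊢
    exact ⟨ha.1, lt_trans ha.2 h⟩
  · intro hsub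
    have := hsub (by simp only [Finset.mem_filter, List.mem_toFinset]; exact ⟨hx, h⟩ :
      x ∈ L.toFinset.filter (fun w => w < y))
    simp at this

lemma rk_iff (L : List ℕ) {x y : ℕ} (hy : y ∈ L) : x ≤ y ↔ rk L x ≤ rk L y := by
  constructor
  · exact rk_mono L
  · intro h
    by_contra hxy
    exact absurd (rk_strict L hy (Nat.lt_of_not_le hxy)) (by omega)

lemma ordIso_red (L : List ℕ) : OrdIso (red L) L := by
  refine ⟨red_length L, ?_⟩
  intro i j hi hj
  rw [red_length] at hi hj
  rw [red_getD L hi, red_getD L hj, getD_eq_get L hi, getD_eq_get L hj]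
  exact (rk_iff L (L.getElem_mem hj)).symm

lemma isCayley_red (L : List ℕ) : IsCayley (red L) := by
  have key : ∀ N : ℕ, ∀ u ∈ L, rk L u = N → ∀ c ≤ N, ∃ u' ∈ L, rk L u' = c := by
    intro N
    induction N with
    | zero => intro u hu hrk c hc; exact ⟨u, hu, by omega⟩
    | succ n ih =>
      intro u hu hrk c hc
      rcases Nat.eq_or_lt_of_le hc with h | h
      · exact ⟨u, hu, by omega⟩
      · have hne : (L.toFinset.filter (fun w => w < u)).Nonempty := by
          rw [← Finset.card_pos, rk] at *; omega
        obtain ⟨hu2L, hu2lt⟩ : ((L.toFinset.filter (fun w => w < u)).max' hne ∈ L)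
            ∧ ((L.toFinset.filter (fun w => w < u)).max' hne < u) := by
          have := (L.toFinset.filter (fun w => w < u)).max'_mem hne
          simp only [Finset.mem_filter, List.mem_toFinset] at this
          exact this
        set u2 := (L.toFinset.filter (fun w => w < u)).max' hne with hu2def
        have herase : L.toFinset.filter (fun w => w < u2)
            = (L.toFinset.filter (fun w => w < u)).erase u2 := by
          ext x
          simp only [Finset.mem_filter, Finset.mem_erase, List.mem_toFinset]
          constructor
          · rintro ⟨h1, h2⟩
            exact ⟨by omega, h1, lt_trans h2 hu2lt⟩
          · rintro ⟨h1, h2, h3⟩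
            have hxmem : x ∈ L.toFinset.filter (fun w => w < u) := by
              simp only [Finset.mem_filter, List.mem_toFinset]; exact ⟨h2, h3⟩
            have := Finset.le_max' _ x hxmem
            exact ⟨h2, by omega⟩
        have hu2mem' : u2 ∈ L.toFinset.filter (fun w => w < u) := by
          simp only [Finset.mem_filter, List.mem_toFinset]; exact ⟨hu2L, hu2lt⟩
        have hrk2 : rk L u2 = n := by
          rw [rk, herase, Finset.card_erase_of_mem hu2mem']
          rw [rk] at hrk; omega
        exact ih u2 hu2L hrk2 c (by omega)
  intro v w hw hvw
  rw [red_eq_map, List.mem_map] at hw ⊢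
  obtain ⟨u, hu, hrku⟩ := hw
  obtain ⟨u', hu', hrk'⟩ := key (rk L u) u hu rfl v (by omega)
  exact ⟨u', hu', hrk'⟩

lemma isInvSeq_red {L : List ℕ} (h : IsInvSeq L) : IsInvSeq (red L) := by
  intro i hi
  rw [red_length] at hi
  rw [red_getD L hi]
  exact le_trans (rk_le L _) (h i hi)

lemma cayley_toFinset {L : List ℕ} (h : IsCayley L) :
    L.toFinset = Finset.range L.toFinset.card := by
  ext v
  simp only [Finset.mem_range, List.mem_toFinset]
  constructor
  · intro hv
    have hsub : Finset.range (v + 1) ⊆ L.toFinset := by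
      intro x hx
      simp only [Finset.mem_range] at hx
      exact List.mem_toFinset.2 (h x v hv (by omega))
    have := Finset.card_le_card hsub
    simpa using this
  · intro hv
    by_contra hvL
    have hsub : L.toFinset ⊆ Finset.range v := by
      intro x hx
      simp only [List.mem_toFinset] at hx
      simp only [Finset.mem_range]
      by_contra hxv
      exact hvL (h v x hx (by omega))
    have := Finset.card_le_card hsub
    simp at this; omega


lemma length_eraseIdx' (σ : List ℕ) {t : ℕ} (ht : t < σ.length) :
    (σ.eraseIdx t).length = σ.length - 1 := by
  rw [List.length_eraseIdx]; simp [ht]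

/-- if a sublist embedding avoids index q, the sublist survives deleting q -/
lemma sublist_eraseIdx_of_avoid {τ₀ σ : List ℕ} {q : ℕ} (hq : q < σ.length)
    (f : Fin τ₀.length ↪o Fin σ.length)
    (hf : ∀ ix : Fin τ₀.length, τ₀.get ix = σ.get (f ix))
    (havoid : ∀ ix : Fin τ₀.length, (f ix : ℕ) ≠ q) :
    τ₀.Sublist (σ.eraseIdx q) := by
  rw [List.sublist_iff_exists_fin_orderEmbedding_get_eq]
  have hlen : (σ.eraseIdx q).length = σ.length - 1 := length_eraseIdx' σ hq
  have hbound : ∀ ix : Fin τ₀.length,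
      (if (f ix : ℕ) < q then (f ix : ℕ) else (f ix : ℕ) - 1) < (σ.eraseIdx q).length := by
    intro ix
    have h1 : (f ix : ℕ) < σ.length := (f ix).2
    have h2 := havoid ix
    rw [hlen]
    split <;> omega
  refine ⟨OrderEmbedding.ofStrictMono
    (fun ix => ⟨if (f ix : ℕ) < q then (f ix : ℕ) else (f ix : ℕ) - 1, hbound ix⟩) ?_, ?_⟩
  · intro ix iy hxy
    have hmono : (f ix : ℕ) < (f iy : ℕ) := by
      have := f.strictMono hxy; exact this
    have h2 := havoid ix
    have h3 := havoid iy
    simp only [Fin.mk_lt_mk]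
    split <;> split <;> omega
  · intro ix
    rw [hf ix]
    simp only [List.get_eq_getElem, OrderEmbedding.coe_ofStrictMono]
    change σ[(f ix : ℕ)] = (σ.eraseIdx q)[(if (f ix : ℕ) < q then (f ix : ℕ) else (f ix : ℕ) - 1)]'(hbound ix)
    have h2 := havoid ix
    by_cases hcase : (f ix : ℕ) < q
    · simp only [hcase, if_true]
      rw [List.getElem_eraseIdx, dif_pos hcase]
    · simp only [hcase, if_false]
      rw [List.getElem_eraseIdx, dif_neg (by omega : ¬ ((f ix : ℕ) - 1 < q))]
      congr 1
      omega

/-- Deletion master lemma: if after deleting index `t` the result (reduced) is an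
inversion sequence and still contains ρ, we contradict minimality. -/
lemma del {ρ σ : List ℕ} (hmin : IsMinimalFor ρ σ) {t : ℕ} (ht : t < σ.length)
    {τ₀ : List ℕ} (hiso : OrdIso ρ τ₀) (hs : τ₀.Sublist (σ.eraseIdx t))
    (hinv : IsInvSeq (red (σ.eraseIdx t))) : False := by
  set σ' := σ.eraseIdx t with hσ'
  have hcρ : ContainsPat (red σ') ρ := by
    refine ⟨τ₀.map (rk σ'), ?_, ?_⟩
    · rw [red_eq_map]; exact List.Sublist.map _ hs
    · obtain ⟨hl, hiff⟩ := hiso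
      refine ⟨by simpa using hl, ?_⟩
      intro i j hi hj
      have hi' : i < τ₀.length := by omega
      have hj' : j < τ₀.length := by omega
      have hmi : i < (τ₀.map (rk σ')).length := by simpa using hi'
      have hmj : j < (τ₀.map (rk σ')).length := by simpa using hj'
      rw [getD_eq_get _ hmi, getD_eq_get _ hmj, List.getElem_map, List.getElem_map]
      rw [hiff i j hi hj, getD_eq_get _ hi', getD_eq_get _ hj']
      exact rk_iff σ' (hs.subset (τ₀.getElem_mem hj'))
  have hcσ : ContainsPat σ (red σ') := ⟨σ', List.eraseIdx_sublist σ t, ordIso_red σ'⟩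
  have := hmin.2.2.2 (red σ') hinv (isCayley_red σ') hcρ hcσ
  have hlen : (red σ').length = σ.length - 1 := by
    rw [red_length, hσ', length_eraseIdx' σ ht]
  rw [this] at hlen
  omega

/-- Case B1: no saturated entry after t -/
lemma invSeq_eraseIdx {σ : List ℕ} (hσ : IsInvSeq σ) {t : ℕ} (ht : t < σ.length)
    (hnos : ∀ j, t < j → j < σ.length → σ.getD j 0 ≠ j) :
    IsInvSeq (σ.eraseIdx t) := by
  intro i hi
  have hlen : (σ.eraseIdx t).length = σ.length - 1 := length_eraseIdx' σ ht
  rw [hlen] at hi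
  rw [getD_eq_get _ (by rw [hlen]; omega), List.getElem_eraseIdx]
  split
  · next h => exact le_trans (by rw [← getD_eq_get σ (by omega)]; exact hσ i (by omega)) le_rfl
  · next h =>
    have h1 : σ.getD (i+1) 0 ≤ i + 1 := hσ (i+1) (by omega)
    have h2 : σ.getD (i+1) 0 ≠ i + 1 := hnos (i+1) (by omega) (by omega)
    rw [getD_eq_get σ (by omega)] at h1 h2
    omega

/-- Case B2: value at t occurs only at t -/
lemma invSeq_red_eraseIdx_unique {σ : List ℕ} (hσ : IsInvSeq σ) {t : ℕ} (ht : t < σ.length)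
    (huniq : ∀ j, j < σ.length → j ≠ t → σ.getD j 0 ≠ σ.getD t 0) :
    IsInvSeq (red (σ.eraseIdx t)) := by
  set σ' := σ.eraseIdx t with hσ'
  have hlen : σ'.length = σ.length - 1 := length_eraseIdx' σ ht
  have hnotmem : ∀ x ∈ σ', x ≠ σ.getD t 0 := by
    intro x hx
    rw [List.mem_iff_getElem] at hx
    obtain ⟨jj, hjj, hx⟩ := hx
    have hjj' : jj < σ.length - 1 := by rw [← hlen]; exact hjj
    have hx2 : x = if _ : jj < t then σ[jj]'(by omega) else σ[jj+1]'(by omega) := by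
      rw [← hx]; exact List.getElem_eraseIdx (l := σ) (i := t) (j := jj) (by rw [length_eraseIdx' σ ht]; omega)
    split at hx2
    · next h =>
      rw [← getD_eq_get σ (by omega)] at hx2
      exact hx2 ▸ huniq jj (by omega) (by omega)
    · next h =>
      rw [← getD_eq_get σ (by omega)] at hx2
      exact hx2 ▸ huniq (jj+1) (by omega) (by omega)
  intro i hi
  rw [red_length] at hi
  rw [red_getD σ' hi]
  set u := σ'.getD i 0 with hu
  have humem : u ∈ σ' := by
    rw [hu, getD_eq_get σ' hi]; exact σ'.getElem_mem hi
  have hi' : i < σ.length - 1 := by rw [← hlen]; exact hi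
  have hval : u = if _ : i < t then σ[i]'(by omega) else σ[i+1]'(by omega) := by
    rw [hu, getD_eq_get σ' hi]
    exact List.getElem_eraseIdx (l := σ) (i := t) (j := i) (by rw [length_eraseIdx' σ ht]; omega)
  have hub : u ≤ i + 1 ∧ (i < t → u ≤ i) := by
    constructor
    · split at hval
      · have := hσ i (by omega); rw [getD_eq_get σ (by omega)] at this; omega
      · have := hσ (i+1) (by omega); rw [getD_eq_get σ (by omega)] at this; omega
    · intro hit
      split at hval
      · have := hσ i (by omega); rw [getD_eq_get σ (by omega)] at this; omega
      · omega
  rcases Nat.lt_or_ge u (i+1) with h | h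
  · exact le_trans (rk_le σ' u) (by omega)
  · -- u = i + 1, and σ_t < u is missing from σ'
    have huval : u = i + 1 := by omega
    have hti : t ≤ i := by
      by_contra hc
      have := hub.2 (by omega); omega
    have hst : σ.getD t 0 < u := by
      have := hσ t ht; omega
    have hsub : σ'.toFinset.filter (fun w => w < u) ⊆ (Finset.range u).erase (σ.getD t 0) := by
      intro x hx
      simp only [Finset.mem_filter, List.mem_toFinset] at hx
      simp only [Finset.mem_erase, Finset.mem_range]
      exact ⟨hnotmem x hx.1, hx.2⟩
    have hcard := Finset.card_le_card hsub
    rw [Finset.card_erase_of_mem (by simpa using hst), Finset.card_range] at hcard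
    have : rk σ' u ≤ u - 1 := hcard
    omega


lemma foldr_max_le {l : List ℤ} {b c : ℤ} (hb : b ≤ c) (h : ∀ x ∈ l, x ≤ c) :
    l.foldr max b ≤ c := by
  induction l with
  | nil => exact hb
  | cons a l ih =>
    simp only [List.foldr_cons, max_le_iff]
    exact ⟨h a (by simp), ih (fun x hx => h x (by simp [hx]))⟩

lemma le_foldr_max {l : List ℤ} {b c : ℤ} (hc : c ∈ l) : c ≤ l.foldr max b := by
  induction l with
  | nil => simp at hc
  | cons a l ih =>
    simp only [List.foldr_cons, le_max_iff]
    rcases List.mem_cons.1 hc with h | h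
    · exact Or.inl (le_of_eq h)
    · exact Or.inr (ih h)

end StmtAux

theorem stmt12 (ρ σ : List ℕ) (hρ : ρ ≠ []) (hC : IsCayley ρ)
    (hmin : IsMinimalFor ρ σ) :
    (σ.length : ℤ) - distv σ = (ρ.length : ℤ) - distv ρ + mdd ρ := by
  classical
  open StmtAux in
  have hσinv := hmin.1
  have hσcay := hmin.2.1
  obtain ⟨τ₀, hsub, hiso⟩ := hmin.2.2.1
  have hτlen : τ₀.length = ρ.length := hiso.1.symm
  have hkpos : 0 < ρ.length := List.length_pos_iff.mpr hρ
  have hnk : ρ.length ≤ σ.length := hτlen ▸ hsub.length_le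
  have hnpos : 0 < σ.length := lt_of_lt_of_le hkpos hnk
  obtain ⟨f, hf⟩ := List.sublist_iff_exists_fin_orderEmbedding_get_eq.mp hsub
  -- the embedding as an ℕ-function
  set e : ℕ → ℕ := fun j => if h : j < τ₀.length then (f ⟨j, h⟩ : ℕ) else j + σ.length
    with hedef
  have ebnd : ∀ {j}, j < ρ.length → e j < σ.length := by
    intro j hj
    have hj' : j < τ₀.length := by omega
    simp only [hedef, dif_pos hj']
    exact (f ⟨j, hj'⟩).2
  have heval : ∀ {j} (hj : j < ρ.length), σ.getD (e j) 0 = τ₀.getD j 0 := by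
    intro j hj
    have hj' : j < τ₀.length := by omega
    simp only [hedef, dif_pos hj']
    rw [getD_eq_get σ (f ⟨j, hj'⟩).2, getD_eq_get τ₀ hj']
    exact (hf ⟨j, hj'⟩).symm
  have emonolt : ∀ {i j}, i < j → j < ρ.length → e i < e j := by
    intro i j hij hj
    have hj' : j < τ₀.length := by omega
    have hi' : i < τ₀.length := by omega
    simp only [hedef, dif_pos hj', dif_pos hi']
    exact f.strictMono (by exact hij : (⟨i, hi'⟩ : Fin τ₀.length) < ⟨j, hj'⟩)
  have emonole : ∀ {i j}, i ≤ j → j < ρ.length → e i ≤ e j := by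
    intro i j hij hj
    rcases Nat.eq_or_lt_of_le hij with h | h
    · rw [h]
    · exact le_of_lt (emonolt h hj)
  have einj : ∀ {i j}, i < ρ.length → j < ρ.length → e i = e j → i = j := by
    intro i j hi hj hij
    rcases lt_trichotomy i j with h | h | h
    · exact absurd hij (by have := emonolt h hj; omega)
    · exact h
    · exact absurd hij (by have := emonolt h hi; omega)
  -- saturated positions
  have hS0 : σ.getD 0 0 = 0 := le_antisymm (hσinv 0 hnpos) (Nat.zero_le _)
  have hSne : ((Finset.range σ.length).filter (fun j => σ.getD j 0 = j)).Nonempty :=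
    ⟨0, by simp only [Finset.mem_filter, Finset.mem_range]; exact ⟨hnpos, hS0⟩⟩
  set s := ((Finset.range σ.length).filter (fun j => σ.getD j 0 = j)).max' hSne with hsdef
  have hs_mem : s < σ.length ∧ σ.getD s 0 = s := by
    have := Finset.max'_mem _ hSne
    rw [Finset.mem_filter, Finset.mem_range] at this
    exact this
  have hs_max : ∀ j, j < σ.length → σ.getD j 0 = j → j ≤ s := by
    intro j h1 h2
    exact Finset.le_max' _ j (by rw [Finset.mem_filter, Finset.mem_range]; exact ⟨h1, h2⟩)
  -- every position ≥ s is in the embedding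
  have hstep3 : ∀ q, q < σ.length → s ≤ q → ∃ ix : Fin τ₀.length, (f ix : ℕ) = q := by
    intro q hq hsq
    by_contra hno
    push_neg at hno
    have hs' : τ₀.Sublist (σ.eraseIdx q) := sublist_eraseIdx_of_avoid hq f hf hno
    have hnos : ∀ j, q < j → j < σ.length → σ.getD j 0 ≠ j := by
      intro j h1 h2 h3
      have := hs_max j h2 h3; omega
    exact del hmin hq hiso hs' (isInvSeq_red (invSeq_eraseIdx hσinv hq hnos))
  -- value sets
  have hvals : σ.toFinset = Finset.range σ.toFinset.card := cayley_toFinset hσcay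
  have hρvals : ρ.toFinset = Finset.range ρ.toFinset.card := cayley_toFinset hC
  set Eset := Finset.range σ.toFinset.card \ τ₀.toFinset with hEdef
  have hτsub : τ₀.toFinset ⊆ Finset.range σ.toFinset.card := by
    intro x hx
    rw [← hvals, List.mem_toFinset]
    exact hsub.subset (List.mem_toFinset.mp hx)
  -- each extra value occurs at least twice
  have hext2 : ∀ w ∈ Eset, ∃ q1 q2, q1 < σ.length ∧ q2 < σ.length ∧ q1 ≠ q2 ∧
      σ.getD q1 0 = w ∧ σ.getD q2 0 = w := by
    intro w hw
    rw [hEdef, Finset.mem_sdiff] at hw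
    have hwmem : w ∈ σ := by rw [← List.mem_toFinset, hvals]; exact hw.1
    obtain ⟨q1, hq1, hq1v⟩ := List.mem_iff_getElem.mp hwmem
    have hq1v' : σ.getD q1 0 = w := by rw [getD_eq_get σ hq1]; exact hq1v
    by_contra hno
    push_neg at hno
    have huniq : ∀ j, j < σ.length → j ≠ q1 → σ.getD j 0 ≠ σ.getD q1 0 := by
      intro j h1 h2 hc
      exact (hno j q1 h1 hq1 h2 (by rw [hc, hq1v']) hq1v').elim
    have havoid : ∀ ix : Fin τ₀.length, (f ix : ℕ) ≠ q1 := by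
      intro ix hc
      apply hw.2
      rw [← hq1v', ← hc]
      have : σ.getD (f ix) 0 = τ₀.getD ix 0 := by
        rw [getD_eq_get σ (f ix).2, getD_eq_get τ₀ ix.2]
        exact (hf ix).symm
      rw [this, getD_eq_get τ₀ ix.2, List.mem_toFinset]
      exact τ₀.getElem_mem ix.2
    exact del hmin hq1 hiso (sublist_eraseIdx_of_avoid hq1 f hf havoid)
      (invSeq_red_eraseIdx_unique hσinv hq1 huniq)
  -- the index hitting position s
  obtain ⟨ix₀, hix₀⟩ := hstep3 s hs_mem.1 le_rfl
  have hj₀k : (ix₀ : ℕ) < ρ.length := by have := ix₀.2; omega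
  have he_ix₀ : e (ix₀ : ℕ) = s := by
    simp only [hedef, dif_pos ix₀.2]
    rw [Fin.eta]
    exact hix₀
  have htj₀ : τ₀.getD (ix₀ : ℕ) 0 = s := by
    rw [← heval hj₀k, he_ix₀]
    exact hs_mem.2
  -- counting: σ.length + ix₀ = ρ.length + s
  have hcount1 : ρ.length - (ix₀ : ℕ) ≤ σ.length - s := by
    have h := Finset.card_le_card_of_injOn e
      (s := Finset.Ico (ix₀ : ℕ) ρ.length) (t := Finset.Ico s σ.length)
      (by
        intro a ha
        rw [Finset.mem_coe, Finset.mem_Ico] at ha ⊢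
        refine ⟨?_, ebnd ha.2⟩
        rw [← he_ix₀]
        exact emonole ha.1 ha.2)
      (by
        intro a ha b hb hab
        rw [Finset.coe_Ico, Set.mem_Ico] at ha hb
        exact einj (by omega) (by omega) hab)
    rwa [Nat.card_Ico, Nat.card_Ico] at h
  have hJex : ∀ q, ∃ j, j < τ₀.length ∧ ((q < σ.length ∧ s ≤ q) → e j = q) := by
    intro q
    by_cases hq : q < σ.length ∧ s ≤ q
    · obtain ⟨ix, hix⟩ := hstep3 q hq.1 hq.2
      refine ⟨(ix : ℕ), ix.2, fun _ => ?_⟩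
      simp only [hedef, dif_pos ix.2]
      rw [Fin.eta]
      exact hix
    · exact ⟨0, by omega, fun hc => absurd hc hq⟩
  choose J hJ1 hJ2 using hJex
  have hcount2 : σ.length - s ≤ ρ.length - (ix₀ : ℕ) := by
    have h := Finset.card_le_card_of_injOn J
      (s := Finset.Ico s σ.length) (t := Finset.Ico (ix₀ : ℕ) ρ.length)
      (by
        intro q hq
        rw [Finset.mem_coe, Finset.mem_Ico] at hq ⊢
        have hJq : e (J q) = q := hJ2 q ⟨hq.2, hq.1⟩
        constructor
        · by_contra hlt
          have : e (J q) < e (ix₀ : ℕ) := emonolt (by omega) hj₀k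
          rw [he_ix₀, hJq] at this
          omega
        · have := hJ1 q; omega)
      (by
        intro a ha b hb hab
        rw [Finset.coe_Ico, Set.mem_Ico] at ha hb
        have h1 : e (J a) = a := hJ2 a ⟨ha.2, ha.1⟩
        have h2 : e (J b) = b := hJ2 b ⟨hb.2, hb.1⟩
        rw [← h1, ← h2, hab])
    rwa [Nat.card_Ico, Nat.card_Ico] at h
  have hcnt : σ.length + (ix₀ : ℕ) = ρ.length + s := by
    have h1 := hs_mem.1
    omega
  -- rank machinery: the j-th entry of τ₀ has exactly ρ_j smaller values in τ₀
  have hiffle := hiso.2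
  have hifflt : ∀ i j, i < ρ.length → j < ρ.length →
      (ρ.getD i 0 < ρ.getD j 0 ↔ τ₀.getD i 0 < τ₀.getD j 0) := by
    intro i j hi hj
    have h1 := hiffle i j hi hj
    have h2 := hiffle j i hj hi
    omega
  have hiffeq : ∀ i j, i < ρ.length → j < ρ.length →
      (ρ.getD i 0 = ρ.getD j 0 ↔ τ₀.getD i 0 = τ₀.getD j 0) := by
    intro i j hi hj
    have h1 := hiffle i j hi hj
    have h2 := hiffle j i hj hi
    omega
  have hidx : ∀ a ∈ ρ.toFinset, ρ.idxOf a < ρ.length ∧ ρ.getD (ρ.idxOf a) 0 = a := by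
    intro a ha
    rw [List.mem_toFinset] at ha
    have h1 : ρ.idxOf a < ρ.length := List.idxOf_lt_length_iff.mpr ha
    exact ⟨h1, by rw [getD_eq_get ρ h1]; exact List.getElem_idxOf h1⟩
  set φ : ℕ → ℕ := fun a => τ₀.getD (ρ.idxOf a) 0 with hφdef
  have hφmem : ∀ a ∈ ρ.toFinset, φ a ∈ τ₀.toFinset := by
    intro a ha
    have h1 := (hidx a ha).1
    have h1' : ρ.idxOf a < τ₀.length := by omega
    rw [hφdef]
    simp only []
    rw [getD_eq_get τ₀ h1', List.mem_toFinset]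
    exact τ₀.getElem_mem h1'
  have hφlt : ∀ a ∈ ρ.toFinset, ∀ b ∈ ρ.toFinset, a < b → φ a < φ b := by
    intro a ha b hb hab
    obtain ⟨ha1, ha2⟩ := hidx a ha
    obtain ⟨hb1, hb2⟩ := hidx b hb
    exact (hifflt _ _ ha1 hb1).mp (by rw [ha2, hb2]; exact hab)
  have hφinj : ∀ a ∈ ρ.toFinset, ∀ b ∈ ρ.toFinset, φ a = φ b → a = b := by
    intro a ha b hb hab
    obtain ⟨ha1, ha2⟩ := hidx a ha
    obtain ⟨hb1, hb2⟩ := hidx b hb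
    have := (hiffeq _ _ ha1 hb1).mpr hab
    rw [ha2, hb2] at this
    exact this
  have hφsurj : ∀ x ∈ τ₀.toFinset, ∃ a ∈ ρ.toFinset, φ a = x := by
    intro x hx
    rw [List.mem_toFinset, List.mem_iff_getElem] at hx
    obtain ⟨i, hi, hxv⟩ := hx
    have hik : i < ρ.length := by omega
    have hamem : ρ.getD i 0 ∈ ρ.toFinset := by
      rw [getD_eq_get ρ hik, List.mem_toFinset]
      exact ρ.getElem_mem hik
    refine ⟨ρ.getD i 0, hamem, ?_⟩
    obtain ⟨h1, h2⟩ := hidx _ hamem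
    have := (hiffeq _ _ h1 hik).mp h2
    rw [hφdef]
    simp only []
    rw [this, getD_eq_get τ₀ (by omega)]
    exact hxv
  have hcard_all : τ₀.toFinset.card = ρ.toFinset.card := by
    symm
    exact Finset.card_bij (fun a _ => φ a) hφmem hφinj
      (fun b hb => by obtain ⟨a, ha, h⟩ := hφsurj b hb; exact ⟨a, ha, h⟩)
  have hrank : ∀ j, j < ρ.length →
      (τ₀.toFinset.filter (fun w => w < τ₀.getD j 0)).card = ρ.getD j 0 := by
    intro j hj
    have hb : (ρ.toFinset.filter (fun w => w < ρ.getD j 0)).card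
        = (τ₀.toFinset.filter (fun w => w < τ₀.getD j 0)).card := by
      apply Finset.card_bij (fun a _ => φ a)
      · intro a ha
        rw [Finset.mem_filter] at ha ⊢
        refine ⟨hφmem a ha.1, ?_⟩
        have hjmem : ρ.getD j 0 ∈ ρ.toFinset := by
          rw [getD_eq_get ρ hj, List.mem_toFinset]; exact ρ.getElem_mem hj
        have h2 := hφlt a ha.1 _ hjmem ha.2
        have hφj : φ (ρ.getD j 0) = τ₀.getD j 0 := by
          obtain ⟨h3, h4⟩ := hidx _ hjmem
          exact (hiffeq _ _ h3 hj).mp h4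
        rwa [hφj] at h2
      · intro a ha b hb hab
        rw [Finset.mem_filter] at ha hb
        exact hφinj a ha.1 b hb.1 hab
      · intro x hx
        rw [Finset.mem_filter] at hx
        obtain ⟨a, ha, hax⟩ := hφsurj x hx.1
        refine ⟨a, ?_, hax⟩
        rw [Finset.mem_filter]
        refine ⟨ha, ?_⟩
        have hjmem : ρ.getD j 0 ∈ ρ.toFinset := by
          rw [getD_eq_get ρ hj, List.mem_toFinset]; exact ρ.getElem_mem hj
        have hφj : φ (ρ.getD j 0) = τ₀.getD j 0 := by
          obtain ⟨h3, h4⟩ := hidx _ hjmem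
          exact (hiffeq _ _ h3 hj).mp h4
        by_contra hge
        have : ρ.getD j 0 ≤ a := by omega
        rcases Nat.eq_or_lt_of_le this with h | h
        · rw [← h, hφj] at hax; omega
        · have := hφlt _ hjmem a ha h
          rw [hφj, hax] at this
          omega
    have hjd : ρ.getD j 0 < ρ.toFinset.card := by
      have : ρ.getD j 0 ∈ ρ.toFinset := by
        rw [getD_eq_get ρ hj, List.mem_toFinset]; exact ρ.getElem_mem hj
      rw [hρvals, Finset.mem_range] at this
      exact this
    have hfr : ρ.toFinset.filter (fun w => w < ρ.getD j 0) = Finset.range (ρ.getD j 0) := by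
      rw [hρvals]
      ext x
      simp only [Finset.mem_filter, Finset.mem_range]
      omega
    rw [← hb, hfr, Finset.card_range]
  -- extras are < s
  have hElt_s : ∀ w ∈ Eset, w < s := by
    intro w hw
    have hw' := hw
    rw [hEdef, Finset.mem_sdiff] at hw'
    have hwmem : w ∈ σ := by rw [← List.mem_toFinset, hvals]; exact hw'.1
    obtain ⟨q, hq, hqv⟩ := List.mem_iff_getElem.mp hwmem
    have hqv' : σ.getD q 0 = w := by rw [getD_eq_get σ hq]; exact hqv
    have hqs : q < s := by
      by_contra hge
      obtain ⟨ix, hix⟩ := hstep3 q hq (by omega)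
      apply hw'.2
      have : σ.getD (f ix) 0 = τ₀.getD ix 0 := by
        rw [getD_eq_get σ (f ix).2, getD_eq_get τ₀ ix.2]
        exact (hf ix).symm
      rw [← hqv', ← hix, this, getD_eq_get τ₀ ix.2, List.mem_toFinset]
      exact τ₀.getElem_mem ix.2
    have := hσinv q hq
    omega
  -- value-count identity at each embedding index
  have hvalcount : ∀ j, j < ρ.length →
      τ₀.getD j 0 + (Eset.filter (fun w => τ₀.getD j 0 ≤ w)).card
        = ρ.getD j 0 + Eset.card := by
    intro j hj
    set u := τ₀.getD j 0 with hu
    have humem : u ∈ τ₀.toFinset := by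
      rw [hu, getD_eq_get τ₀ (by omega), List.mem_toFinset]
      exact τ₀.getElem_mem (by omega)
    have hult : u < σ.toFinset.card := by
      have := hτsub humem
      rwa [Finset.mem_range] at this
    have h1 : ((Finset.range σ.toFinset.card).filter (fun w => w < u)).card = u := by
      have : (Finset.range σ.toFinset.card).filter (fun w => w < u) = Finset.range u := by
        ext x
        simp only [Finset.mem_filter, Finset.mem_range]
        omega
      rw [this, Finset.card_range]
    have hpart : Finset.range σ.toFinset.card = τ₀.toFinset ∪ Eset :=
      (Finset.union_sdiff_of_subset hτsub).symm
    have hdisj : Disjoint τ₀.toFinset Eset := Finset.disjoint_sdiff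
    rw [hpart, Finset.filter_union,
      Finset.card_union_of_disjoint (Finset.disjoint_filter_filter hdisj)] at h1
    have h2 := hrank j hj
    have h3 : (Eset.filter (fun w => w < u)).card
        + (Eset.filter (fun w => u ≤ w)).card = Eset.card := by
      have hc1 := Finset.card_filter_add_card_filter_not (s := Eset)
        (p := fun w => w < u)
      have hc2 : Eset.filter (fun w => ¬ w < u) = Eset.filter (fun w => u ≤ w) :=
        Finset.filter_congr (fun x _ => by simp [not_lt])
      rw [hc2] at hc1
      exact hc1
    rw [← hu] at h2
    omega
  -- main positional inequality
  have hmain : ∀ j, j < ρ.length →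
      ρ.getD j 0 + Eset.card + (ρ.length - j) ≤ σ.length := by
    intro j hj
    set u := τ₀.getD j 0 with hu
    set H := (Eset.filter (fun w => u ≤ w)).card with hH
    set F1 := (Finset.Ico j ρ.length).image e with hF1def
    set F2 := (Finset.range σ.length).filter
      (fun q => σ.getD q 0 ∈ Eset ∧ u ≤ σ.getD q 0) with hF2def
    have huej : u ≤ e j := by
      have h1 := hσinv (e j) (ebnd hj)
      rw [heval hj] at h1
      exact h1
    have hF1card : F1.card = ρ.length - j := by
      rw [hF1def, Finset.card_image_of_injOn, Nat.card_Ico]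
      intro a ha b hb hab
      rw [Finset.coe_Ico, Set.mem_Ico] at ha hb
      exact einj (by omega) (by omega) hab
    have hF1sub : F1 ⊆ Finset.Ico u σ.length := by
      intro x hx
      rw [hF1def, Finset.mem_image] at hx
      obtain ⟨i, hi, rfl⟩ := hx
      rw [Finset.mem_Ico] at hi ⊢
      exact ⟨le_trans huej (emonole hi.1 hi.2), ebnd hi.2⟩
    have hF2sub : F2 ⊆ Finset.Ico u σ.length := by
      intro q hq
      rw [hF2def, Finset.mem_filter, Finset.mem_range] at hq
      rw [Finset.mem_Ico]
      have := hσinv q hq.1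
      exact ⟨le_trans hq.2.2 this, hq.1⟩
    have hdisjF : Disjoint F1 F2 := by
      rw [Finset.disjoint_left]
      intro x hx1 hx2
      rw [hF1def, Finset.mem_image] at hx1
      obtain ⟨i, hi, rfl⟩ := hx1
      rw [Finset.mem_Ico] at hi
      rw [hF2def, Finset.mem_filter] at hx2
      have hv : σ.getD (e i) 0 = τ₀.getD i 0 := heval hi.2
      have hmem : σ.getD (e i) 0 ∈ τ₀.toFinset := by
        rw [hv, getD_eq_get τ₀ (by omega), List.mem_toFinset]
        exact τ₀.getElem_mem (by omega)
      have := hx2.2.1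
      rw [hEdef, Finset.mem_sdiff] at this
      exact this.2 hmem
    have hF2card : 2 * H ≤ F2.card := by
      have hbi : F2 = (Eset.filter (fun w => u ≤ w)).biUnion
          (fun w => (Finset.range σ.length).filter (fun q => σ.getD q 0 = w)) := by
        ext q
        simp only [hF2def, Finset.mem_filter, Finset.mem_biUnion, Finset.mem_range]
        constructor
        · rintro ⟨hq, hmem, hle⟩
          exact ⟨σ.getD q 0, ⟨hmem, hle⟩, hq, rfl⟩
        · rintro ⟨w, ⟨hwE, hwu⟩, hq, hval⟩
          exact ⟨hq, hval ▸ hwE, hval ▸ hwu⟩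
      rw [hbi, Finset.card_biUnion]
      · have : ∀ w ∈ Eset.filter (fun w => u ≤ w),
            2 ≤ ((Finset.range σ.length).filter (fun q => σ.getD q 0 = w)).card := by
          intro w hw
          rw [Finset.mem_filter] at hw
          obtain ⟨q1, q2, h1, h2, h3, h4, h5⟩ := hext2 w hw.1
          have hsub2 : {q1, q2} ⊆ (Finset.range σ.length).filter
              (fun q => σ.getD q 0 = w) := by
            intro x hx
            rw [Finset.mem_insert, Finset.mem_singleton] at hx
            rw [Finset.mem_filter, Finset.mem_range]
            rcases hx with h | h
            · exact ⟨h ▸ h1, h ▸ h4⟩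
            · exact ⟨h ▸ h2, h ▸ h5⟩
          have := Finset.card_le_card hsub2
          rwa [Finset.card_pair h3] at this
        calc 2 * H = ∑ _w ∈ Eset.filter (fun w => u ≤ w), 2 := by
              rw [Finset.sum_const, smul_eq_mul, hH, mul_comm]
          _ ≤ _ := Finset.sum_le_sum this
      · intro x hx y hy hxy
        rw [Function.onFun, Finset.disjoint_left]
        intro q hqx hqy
        rw [Finset.mem_filter] at hqx hqy
        exact hxy (hqx.2 ▸ hqy.2 ▸ rfl)
    have hunion : F1.card + F2.card ≤ σ.length - u := by
      have h1 : F1 ∪ F2 ⊆ Finset.Ico u σ.length := Finset.union_subset hF1sub hF2sub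
      have h2 := Finset.card_le_card h1
      rw [Finset.card_union_of_disjoint hdisjF, Nat.card_Ico] at h2
      exact h2
    have hun : u < σ.length := lt_of_le_of_lt huej (ebnd hj)
    have hv := hvalcount j hj
    rw [← hu, ← hH] at hv
    omega
  -- the identity s = ρ_{j₀} + |E|
  have hEfs : Eset.filter (fun w => s ≤ w) = ∅ := by
    rw [Finset.filter_eq_empty_iff]
    intro w hw
    have := hElt_s w hw
    omega
  have hs_eq : s + 0 = ρ.getD (ix₀ : ℕ) 0 + Eset.card := by
    have h := hvalcount (ix₀ : ℕ) hj₀k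
    rw [htj₀, hEfs] at h
    simpa using h
  -- cardinality identity
  have hM1 : σ.toFinset.card = ρ.toFinset.card + Eset.card := by
    have h1 : Eset.card = σ.toFinset.card - τ₀.toFinset.card := by
      rw [hEdef, Finset.card_sdiff_of_subset hτsub, Finset.card_range]
    have h2 := Finset.card_le_card hτsub
    rw [Finset.card_range] at h2
    omega
  -- key comparison
  have hkey : ∀ j, j < ρ.length → ρ.getD j 0 + (ix₀ : ℕ) ≤ ρ.getD (ix₀ : ℕ) 0 + j := by
    intro j hj
    have h1 := hmain j hj
    omega
  -- compute mdd ρ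
  have hmdd : mdd ρ = (ρ.getD (ix₀ : ℕ) 0 : ℤ) - (ix₀ : ℕ) := by
    rw [mdd]
    apply le_antisymm
    · apply foldr_max_le
      · have h1 : (ix₀ : ℕ) < ρ.length := hj₀k
        push_cast
        omega
      · intro x hx
        rw [List.mem_map] at hx
        obtain ⟨i, hi, rfl⟩ := hx
        rw [List.mem_range] at hi
        have := hkey i hi
        push_cast
        omega
    · apply le_foldr_max
      rw [List.mem_map]
      exact ⟨(ix₀ : ℕ), by rw [List.mem_range]; exact hj₀k, rfl⟩
  rw [hmdd]
  show (σ.length : ℤ) - σ.toFinset.card = (ρ.length : ℤ) - ρ.toFinset.card + _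
  push_cast
  omega
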